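/- Let p > 1 and 0 < m̄ ≤ M̄ < ∞. Define θ₂(ṽ, k, p) = (k−ṽ)^{p+1}/(p+1) − k(k−ṽ)^p/p + k^{p+1}/(p(p+1)). Then there exists C > 0 depending only on m̄, M̄, p such that for all k ∈ [m̄, M̄] and all ṽ with 0 ≤ ṽ ≤ k − m̄/2 (so that k − ṽ ≥ m̄/2 > 0), one has (1/2) k^{p-1} ṽ² − C ṽ³ ≤ θ₂(ṽ, k, p) ≤ (1/2) k^{p-1} ṽ². -/

import Mathlib

open Set Real

private lemma aux_nonneg_of_deriv (f f' : ℝ → ℝ) (v : ℝ) (hv : 0 ≤ v)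
    (hd : ∀ x ∈ Icc 0 v, HasDerivAt f (f' x) x)
    (hf' : ∀ x ∈ Icc 0 v, 0 ≤ f' x) (h0 : f 0 = 0) : 0 ≤ f v := by
  have hmono : MonotoneOn f (Icc 0 v) := by
    apply monotoneOn_of_deriv_nonneg (convex_Icc 0 v)
    · exact fun x hx => ((hd x hx).continuousAt).continuousWithinAt
    · intro x hx
      have hx' : x ∈ Icc 0 v := interior_subset hx
      exact ((hd x hx').differentiableAt).differentiableWithinAt
    · intro x hx
      have hx' : x ∈ Icc 0 v := interior_subset hx
      rw [(hd x hx').deriv]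
      exact hf' x hx'
  have := hmono (left_mem_Icc.2 hv) (right_mem_Icc.2 hv) hv
  linarith [this]

private lemma aux_mvt (p : ℝ) (hp : 1 < p) (a b : ℝ) (ha : 0 < a) (hab : a ≤ b) :
    b ^ (p - 1) - a ^ (p - 1) ≤ (p - 1) * b ^ (p - 1) / a * (b - a) := by
  rcases eq_or_lt_of_le hab with rfl | hlt
  · simp
  have hb : 0 < b := ha.trans hlt
  have hcont : ContinuousOn (fun x : ℝ => x ^ (p - 1)) (Icc a b) := by
    apply ContinuousOn.rpow_const continuousOn_id
    intro x hx
    exact Or.inl (ne_of_gt (lt_of_lt_of_le ha hx.1))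
  have hder : ∀ x ∈ Ioo a b,
      HasDerivAt (fun x : ℝ => x ^ (p - 1)) ((p - 1) * x ^ (p - 1 - 1)) x := by
    intro x hx
    have := (hasDerivAt_id x).rpow_const (p := p - 1) (Or.inl (ne_of_gt (ha.trans hx.1)))
    simpa using this
  obtain ⟨c, hc, hceq⟩ := exists_hasDerivAt_eq_slope (fun x : ℝ => x ^ (p - 1))
    (fun x => (p - 1) * x ^ (p - 1 - 1)) hlt hcont hder
  have hc0 : 0 < c := ha.trans hc.1
  have heq : b ^ (p - 1) - a ^ (p - 1) = (p - 1) * c ^ (p - 1 - 1) * (b - a) := by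
    rw [hceq, div_mul_cancel₀ _ (by linarith : b - a ≠ 0)]
  rw [heq]
  have hcs : c ^ (p - 1 - 1) = c ^ (p - 1) / c := Real.rpow_sub_one (ne_of_gt hc0) _
  have h1 : c ^ (p - 1) ≤ b ^ (p - 1) :=
    Real.rpow_le_rpow (le_of_lt hc0) (le_of_lt hc.2) (by linarith)
  have h2 : c ^ (p - 1) / c ≤ b ^ (p - 1) / a := by
    apply div_le_div₀ (Real.rpow_nonneg hb.le _) h1 ha (le_of_lt hc.1)
  have hcnn : (0:ℝ) ≤ c ^ (p - 1 - 1) := Real.rpow_nonneg hc0.le _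
  have : (p - 1) * c ^ (p - 1 - 1) ≤ (p - 1) * b ^ (p - 1) / a := by
    rw [hcs] at *
    rw [mul_div_assoc]
    exact mul_le_mul_of_nonneg_left h2 (by linarith)
  exact mul_le_mul_of_nonneg_right this (by linarith) |>.trans_eq rfl

private lemma aux_hasDerivAt_F (p k : ℝ) (hp : 1 < p) (x : ℝ) (hx : 0 < k - x) :
    HasDerivAt
      (fun v => (k - v) ^ (p + 1) / (p + 1) - k * (k - v) ^ p / p + k ^ (p + 1) / (p * (p + 1)))
      (x * (k - x) ^ (p - 1)) x := by
  have h0 : HasDerivAt (fun v : ℝ => k - v) (-1) x := by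
    simpa using (hasDerivAt_id x).const_sub k
  have h1 : HasDerivAt (fun v : ℝ => (k - v) ^ (p + 1)) (-1 * (p + 1) * (k - x) ^ p) x := by
    have := h0.rpow_const (p := p + 1) (Or.inl (ne_of_gt hx))
    simpa [add_sub_cancel_right] using this
  have h2 : HasDerivAt (fun v : ℝ => (k - v) ^ p) (-1 * p * (k - x) ^ (p - 1)) x :=
    h0.rpow_const (p := p) (Or.inl (ne_of_gt hx))
  have hD := (((h1.div_const (p + 1)).sub ((h2.const_mul k).div_const p)).add_const
    (k ^ (p + 1) / (p * (p + 1))))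
  refine hD.congr_deriv ?_
  have hsplit : (k - x) ^ p = (k - x) ^ (p - 1) * (k - x) := by
    rw [← Real.rpow_add_one (ne_of_gt hx) (p - 1)]
    ring_nf
  have hp0 : p ≠ 0 := by linarith
  have hp1 : p + 1 ≠ 0 := by linarith
  field_simp
  rw [hsplit]
  ring

set_option maxHeartbeats 1000000 in
theorem stmt_6 (p : ℝ) (hp : 1 < p) (m M : ℝ) (hm : 0 < m) (hmM : m ≤ M) :
    ∃ C > 0, ∀ k ∈ Set.Icc m M, ∀ v : ℝ, 0 ≤ v → v ≤ k - m / 2 →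
      (1 / 2) * k ^ (p - 1) * v ^ 2 - C * v ^ 3 ≤
          (k - v) ^ (p + 1) / (p + 1) - k * (k - v) ^ p / p + k ^ (p + 1) / (p * (p + 1)) ∧
        (k - v) ^ (p + 1) / (p + 1) - k * (k - v) ^ p / p + k ^ (p + 1) / (p * (p + 1)) ≤
          (1 / 2) * k ^ (p - 1) * v ^ 2 := by
  have hp0 : (0:ℝ) < p - 1 := by linarith
  have hMpos : 0 < M := lt_of_lt_of_le hm hmM
  set C := (p - 1) * M ^ (p - 1) * (2 / m) + 1 with hC
  have hCnn : 0 ≤ (p - 1) * M ^ (p - 1) * (2 / m) := by positivity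
  have hCpos : 0 < C := by rw [hC]; linarith
  refine ⟨C, hCpos, ?_⟩
  intro k hk v hv0 hv1
  have hkm : m ≤ k := hk.1
  have hkM : k ≤ M := hk.2
  have hkpos : 0 < k := lt_of_lt_of_le hm hkm
  have hx_pos : ∀ x ∈ Icc (0:ℝ) v, 0 < k - x := by
    intro x hx
    have := hx.2
    have : m / 2 ≤ k - x := by linarith
    linarith
  set F : ℝ → ℝ := fun w =>
    (k - w) ^ (p + 1) / (p + 1) - k * (k - w) ^ p / p + k ^ (p + 1) / (p * (p + 1)) with hF
  have hkk : k * k ^ p = k ^ (p + 1) := by rw [Real.rpow_add_one (ne_of_gt hkpos)]; ring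
  have hF0 : F 0 = 0 := by
    simp only [hF, sub_zero]
    rw [hkk]
    field_simp
    ring
  -- the square / cube derivatives
  have hsq : ∀ x : ℝ, HasDerivAt (fun w : ℝ => (1 / 2) * k ^ (p - 1) * w ^ 2)
      (k ^ (p - 1) * x) x := by
    intro x
    have := (hasDerivAt_pow 2 x).const_mul ((1 / 2) * k ^ (p - 1))
    refine this.congr_deriv ?_
    simp; ring
  have hcube : ∀ x : ℝ, HasDerivAt (fun w : ℝ => C * w ^ 3) (3 * C * x ^ 2) x := by
    intro x
    have := (hasDerivAt_pow 3 x).const_mul C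
    refine this.congr_deriv ?_
    simp; ring
  -- Upper bound
  have hub : 0 ≤ (1 / 2) * k ^ (p - 1) * v ^ 2 - F v := by
    have := aux_nonneg_of_deriv (fun w => (1 / 2) * k ^ (p - 1) * w ^ 2 - F w)
      (fun x => k ^ (p - 1) * x - x * (k - x) ^ (p - 1)) v hv0
      (fun x hx => (hsq x).sub (aux_hasDerivAt_F p k hp x (hx_pos x hx)))
      (fun x hx => by
        have h1 : (k - x) ^ (p - 1) ≤ k ^ (p - 1) :=
          Real.rpow_le_rpow (le_of_lt (hx_pos x hx)) (by linarith [hx.1]) (le_of_lt hp0)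
        nlinarith [mul_nonneg hx.1 (sub_nonneg.2 h1)])
      (by simp [hF0])
    simpa using this
  -- Lower bound
  have hlb : 0 ≤ F v - ((1 / 2) * k ^ (p - 1) * v ^ 2 - C * v ^ 3) := by
    have := aux_nonneg_of_deriv (fun w => F w - (1 / 2) * k ^ (p - 1) * w ^ 2 + C * w ^ 3)
      (fun x => x * (k - x) ^ (p - 1) - k ^ (p - 1) * x + 3 * C * x ^ 2) v hv0
      (fun x hx => ((aux_hasDerivAt_F p k hp x (hx_pos x hx)).sub (hsq x)).add (hcube x))
      (fun x hx => by
        have hxk : 0 < k - x := hx_pos x hx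
        have hmvt := aux_mvt p hp (k - x) k hxk (by linarith [hx.1])
        have hkM' : k ^ (p - 1) ≤ M ^ (p - 1) :=
          Real.rpow_le_rpow (le_of_lt hkpos) hkM (le_of_lt hp0)
        have hm2 : m / 2 ≤ k - x := by
          have := hx.2; linarith
        have hdiv : k ^ (p - 1) / (k - x) ≤ M ^ (p - 1) / (m / 2) :=
          div_le_div₀ (Real.rpow_nonneg (le_of_lt hMpos) _) hkM' (by linarith) hm2
        have heq2 : M ^ (p - 1) / (m / 2) = M ^ (p - 1) * (2 / m) := by
          field_simp
        have hchain : k ^ (p - 1) - (k - x) ^ (p - 1) ≤ C * x := by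
          have h3 : (p - 1) * (k ^ (p - 1) / (k - x)) ≤ (p - 1) * (M ^ (p - 1) * (2 / m)) := by
            rw [← heq2]
            exact mul_le_mul_of_nonneg_left hdiv (le_of_lt hp0)
          have h4 : (p - 1) * (M ^ (p - 1) * (2 / m)) ≤ C := by rw [hC]; nlinarith
          calc k ^ (p - 1) - (k - x) ^ (p - 1)
              ≤ (p - 1) * k ^ (p - 1) / (k - x) * (k - (k - x)) := hmvt
            _ = (p - 1) * (k ^ (p - 1) / (k - x)) * x := by ring
            _ ≤ C * x := by nlinarith [hx.1]
        nlinarith [mul_le_mul_of_nonneg_left hchain hx.1,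
          mul_nonneg (mul_nonneg hCpos.le hx.1) hx.1])
      (by simp [hF0])
    linarith
  have hFv : F v
      = (k - v) ^ (p + 1) / (p + 1) - k * (k - v) ^ p / p + k ^ (p + 1) / (p * (p + 1)) := rfl
  rw [← hFv]
  exact ⟨by linarith, by linarith⟩
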